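/- Let M be the monoid, under composition, of all maps f : ℚ → ℚ such that a ≤ b implies f(a) ≤ f(b). Then the Zariski topology on M coincides with the topology of pointwise convergence on M; in particular, the topology of pointwise convergence is the coarsest Hausdorff semigroup topology on M. -/

import Mathlib

/-- Evaluation of the word `p_k · s · p_{k-1} · s ⋯ s · p_0` at `s`,
where the word is given by its lowest coefficient `p₀` and the list
`ps = [p₁, …, p_k]` of the remaining coefficients. -/
def wordEval {S : Type*} [Monoid S] (s : S) (p₀ : S) (ps : List S) : S :=
  ps.foldl (fun acc q => q * s * acc) p₀

/-- The Zariski topology on a monoid `S`: generated by the sets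
`M_{φ,ψ} = {s | φ(s) ≠ ψ(s)}` for all pairs of words `φ, ψ` with coefficients in `S`. -/
def zariskiTopology (S : Type*) [Monoid S] : TopologicalSpace S :=
  TopologicalSpace.generateFrom
    { M : Set S | ∃ (p₀ : S) (ps : List S) (q₀ : S) (qs : List S),
        M = { s : S | wordEval s p₀ ps ≠ wordEval s q₀ qs } }

/-- The topology of pointwise convergence on functions `A → A`:
the product topology where every factor `A` is discrete. -/
def pwTop (A : Type*) : TopologicalSpace (A → A) :=
  @Pi.topologicalSpace A (fun _ => A) (fun _ => ⊥)

/-- The monoid of all monotone self-maps of `ℚ` (the endomorphism monoid of `⟨ℚ, ≤⟩`),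
as a submonoid of `Function.End ℚ`. -/
def monoEndQ : Submonoid (Function.End ℚ) where
  carrier := {f | Monotone f}
  one_mem' := monotone_id
  mul_mem' := fun hf hg => hf.comp hg

/-- `T` is a Hausdorff semigroup topology on the monoid `M`. -/
def IsHausdorffSemigroupTopology {M : Type*} [Monoid M] (T : TopologicalSpace M) : Prop :=
  @T2Space M T ∧
    @Continuous (M × M) M (@instTopologicalSpaceProd M M T T) T (fun p => p.1 * p.2)

namespace Stmt9Aux

abbrev MQ := ↥monoEndQ

def pwM : TopologicalSpace MQ :=
  TopologicalSpace.induced (fun s : MQ => (s.1 : ℚ → ℚ)) (pwTop ℚ)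

lemma mul_apply (x y : MQ) (q : ℚ) : (x * y).1 q = x.1 (y.1 q) := rfl

def cst (q : ℚ) : MQ := ⟨fun _ => q, monotone_const⟩

def stepLE (b : ℚ) : MQ :=
  ⟨fun x => if x ≤ b then (0:ℚ) else 1, by
    intro x y hxy
    dsimp only
    split_ifs with h1 h2 h2
    · exact le_refl _
    · norm_num
    · exact absurd (hxy.trans h2) h1
    · exact le_refl _⟩

def stepLT (b : ℚ) : MQ :=
  ⟨fun x => if x < b then (0:ℚ) else 1, by
    intro x y hxy
    dsimp only
    split_ifs with h1 h2 h2
    · exact le_refl _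
    · norm_num
    · exact absurd (lt_of_le_of_lt hxy h2) h1
    · exact le_refl _⟩

lemma isOpen_le_zariski (a b : ℚ) :
    @IsOpen MQ (zariskiTopology MQ) {s : MQ | s.1 a ≤ b} := by
  apply TopologicalSpace.GenerateOpen.basic
  refine ⟨cst a, [stepLE b], cst 1, [], ?_⟩
  ext s
  simp only [Set.mem_setOf_eq, wordEval, List.foldl]
  constructor
  · intro h heq
    have h0 := congrArg (fun t : MQ => t.1 0) heq
    simp only [mul_apply, cst, stepLE, if_pos h] at h0
    norm_num at h0
  · intro h
    by_contra hle
    apply h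
    apply Subtype.ext; funext q
    show (stepLE b).1 (s.1 ((cst a).1 q)) = (cst 1).1 q
    simp only [cst, stepLE, if_neg hle]

lemma isOpen_ge_zariski (a b : ℚ) :
    @IsOpen MQ (zariskiTopology MQ) {s : MQ | b ≤ s.1 a} := by
  apply TopologicalSpace.GenerateOpen.basic
  refine ⟨cst a, [stepLT b], cst 0, [], ?_⟩
  ext s
  simp only [Set.mem_setOf_eq, wordEval, List.foldl]
  constructor
  · intro h heq
    have h0 := congrArg (fun t : MQ => t.1 0) heq
    simp only [mul_apply, cst, stepLT, if_neg (not_lt.2 h)] at h0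
    norm_num at h0
  · intro h
    rw [← not_lt]
    intro hlt
    apply h
    apply Subtype.ext; funext q
    show (stepLT b).1 (s.1 ((cst a).1 q)) = (cst 0).1 q
    simp only [cst, stepLT, if_pos hlt]

lemma isOpen_eq_zariski (a b : ℚ) :
    @IsOpen MQ (zariskiTopology MQ) {s : MQ | s.1 a = b} := by
  have h : {s : MQ | s.1 a = b} = {s | s.1 a ≤ b} ∩ {s | b ≤ s.1 a} := by
    ext s; simp [Set.mem_setOf_eq, le_antisymm_iff]
  rw [h]
  exact @IsOpen.inter MQ (zariskiTopology MQ) _ _ (isOpen_le_zariski a b) (isOpen_ge_zariski a b)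

end Stmt9Aux

namespace Stmt9Aux

lemma pw_hausdorff_semigroup : IsHausdorffSemigroupTopology pwM := by
  letI : TopologicalSpace ℚ := ⊥
  haveI : DiscreteTopology ℚ := ⟨rfl⟩
  letI : TopologicalSpace MQ := pwM
  constructor
  · exact Topology.IsEmbedding.t2Space (Y := ℚ → ℚ)
      (f := fun s : MQ => (s.1 : ℚ → ℚ)) ⟨⟨rfl⟩, fun a b h => Subtype.ext h⟩
  · apply continuous_induced_rng.2
    apply continuous_pi
    intro a
    refine continuous_discrete_rng.2 fun b => ?_
    have hev : ∀ c : ℚ, Continuous fun s : MQ => s.1 c :=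
      fun c => (continuous_apply c).comp continuous_induced_dom
    have h : (fun p : MQ × MQ => ((p.1 * p.2).1 : ℚ → ℚ) a) ⁻¹' {b}
        = ⋃ c : ℚ, ((fun p : MQ × MQ => p.2.1 a) ⁻¹' {c} ∩ (fun p : MQ × MQ => p.1.1 c) ⁻¹' {b}) := by
      ext p
      simp only [Set.mem_preimage, Set.mem_singleton_iff, Set.mem_iUnion, Set.mem_inter_iff]
      constructor
      · intro h; exact ⟨p.2.1 a, rfl, h⟩
      · rintro ⟨c, hc, hb⟩; rw [mul_apply, hc]; exact hb
    show IsOpen ((fun p : MQ × MQ => ((p.1 * p.2).1 : ℚ → ℚ) a) ⁻¹' {b})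
    rw [h]
    apply isOpen_iUnion
    intro c
    exact (((hev a).comp continuous_snd).isOpen_preimage _ (isOpen_discrete _)).inter
      (((hev c).comp continuous_fst).isOpen_preimage _ (isOpen_discrete _))

lemma hsgt_le_zariski (T : TopologicalSpace MQ) (hT : IsHausdorffSemigroupTopology T) :
    T ≤ zariskiTopology MQ := by
  apply le_generateFrom
  rintro U ⟨p₀, ps, q₀, qs, rfl⟩
  letI := T
  obtain ⟨h2, hmul⟩ := hT
  haveI : T2Space MQ := h2
  have hmulc : ∀ {X : Type} [TopologicalSpace X] {f g : X → MQ},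
      Continuous f → Continuous g → Continuous fun x => f x * g x := by
    intro X _ f g hf hg
    exact hmul.comp (hf.prodMk hg)
  have key : ∀ (ps : List MQ) (g : MQ → MQ), Continuous g →
      Continuous fun s => ps.foldl (fun acc q => q * s * acc) (g s) := by
    intro ps
    induction ps with
    | nil => exact fun g hg => hg
    | cons p ps ih =>
      intro g hg
      simp only [List.foldl_cons]
      exact ih _ (hmulc (hmulc continuous_const continuous_id) hg)
  have hw : ∀ (p₀ : MQ) (ps : List MQ), Continuous fun s => wordEval s p₀ ps :=
    fun p₀ ps => key ps (fun _ => p₀) continuous_const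
  have h : {s : MQ | wordEval s p₀ ps ≠ wordEval s q₀ qs}
      = {s : MQ | wordEval s p₀ ps = wordEval s q₀ qs}ᶜ := rfl
  rw [h]
  exact (isClosed_eq (hw p₀ ps) (hw q₀ qs)).isOpen_compl

lemma zariski_le_pw : zariskiTopology MQ ≤ pwM := by
  have hpw : pwM = ⨅ a : ℚ, TopologicalSpace.induced (fun s : MQ => s.1 a) ⊥ := by
    simp only [pwM, pwTop, Pi.topologicalSpace, induced_iInf, induced_compose]
    exact induced_iInf.trans (iInf_congr fun a => induced_compose)
  rw [hpw]
  refine le_iInf fun a => ?_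
  refine (continuous_iff_le_induced (t₁ := zariskiTopology MQ) (t₂ := (⊥ : TopologicalSpace ℚ)) (f := fun s : MQ => s.1 a)).1 ?_
  letI : TopologicalSpace ℚ := ⊥
  haveI : DiscreteTopology ℚ := ⟨rfl⟩
  letI : TopologicalSpace MQ := zariskiTopology MQ
  refine continuous_discrete_rng.2 fun b => ?_
  have h : (fun s : MQ => s.1 a) ⁻¹' {b} = {s : MQ | s.1 a = b} := rfl
  rw [h]
  exact isOpen_eq_zariski a b

end Stmt9Aux

/-- On the monoid of monotone self-maps of `ℚ` under composition, the Zariski topology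
coincides with the topology of pointwise convergence; in particular the pointwise topology
is the coarsest Hausdorff semigroup topology. -/
theorem stmt9 :
    zariskiTopology ↥monoEndQ =
        TopologicalSpace.induced (fun s : ↥monoEndQ => (s.1 : ℚ → ℚ)) (pwTop ℚ) ∧
    IsHausdorffSemigroupTopology
        (TopologicalSpace.induced (fun s : ↥monoEndQ => (s.1 : ℚ → ℚ)) (pwTop ℚ)) ∧
    ∀ T : TopologicalSpace ↥monoEndQ, IsHausdorffSemigroupTopology T →
      T ≤ TopologicalSpace.induced (fun s : ↥monoEndQ => (s.1 : ℚ → ℚ)) (pwTop ℚ) := by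
  have hpw := Stmt9Aux.pw_hausdorff_semigroup
  have heq : zariskiTopology Stmt9Aux.MQ = Stmt9Aux.pwM :=
    le_antisymm Stmt9Aux.zariski_le_pw (Stmt9Aux.hsgt_le_zariski _ hpw)
  exact ⟨heq, hpw, fun T hT => le_trans (Stmt9Aux.hsgt_le_zariski T hT) heq.le⟩
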